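/- Let G = (V, ω) be a finite connected weighted graph with vertex measure μ, let h, f : V → ℝ with f_i > 0 for all i, and let α ≥ p > 1. If φ̂ : V → ℝ with φ̂ ≥ 0 and φ̂ ≢ 0 minimizes the energy functional, i.e. I(φ̂) ≤ I(φ) for all φ ≥ 0 with φ ≢ 0, then φ̂_i > 0 for every i ∈ V. -/

import Mathlib

open Finset

private lemma lemA {m t p : ℝ} (ht : 0 < t) (htm : t ≤ m / 2) (hp : 1 < p) :
    (m - t) ^ p - m ^ p ≤ -(p * (m / 2) ^ (p - 1) * t) := by
  have hmt : 0 < m - t := by linarith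
  set s := t / (m - t) with hs
  have hs0 : 0 ≤ s := by positivity
  have hber : 1 + p * s ≤ (1 + s) ^ p :=
    one_add_mul_self_le_rpow_one_add (by linarith) hp.le
  have hmul : (m - t) ^ p * (1 + s) ^ p = m ^ p := by
    rw [← Real.mul_rpow hmt.le (by linarith)]
    congr 1
    rw [hs]
    field_simp
    ring
  have h1 : (m - t) ^ p * (1 + p * s) ≤ m ^ p := by
    rw [← hmul]
    exact mul_le_mul_of_nonneg_left hber (Real.rpow_nonneg hmt.le _)
  have h2 : (m - t) ^ p * s = (m - t) ^ (p - 1) * t := by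
    rw [Real.rpow_sub hmt, Real.rpow_one, hs]
    field_simp
  have h3 : (m / 2) ^ (p - 1) ≤ (m - t) ^ (p - 1) :=
    Real.rpow_le_rpow (by linarith) (by linarith) (by linarith)
  have h4 : p * ((m / 2) ^ (p - 1) * t) ≤ p * ((m - t) ^ (p - 1) * t) := by
    apply mul_le_mul_of_nonneg_left _ (by linarith)
    exact mul_le_mul_of_nonneg_right h3 ht.le
  nlinarith [h1, h2, h4]

private lemma lemB {a t p : ℝ} (ha : 0 ≤ a) (ht : 0 ≤ t) (hp : 0 < p) :
    |a - t| ^ p - a ^ p ≤ t ^ p := by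
  rcases le_total t a with hle | hle
  · have h1 : |a - t| ^ p ≤ a ^ p := by
      rw [abs_of_nonneg (by linarith)]
      exact Real.rpow_le_rpow (by linarith) (by linarith) hp.le
    have h2 : (0:ℝ) ≤ t ^ p := Real.rpow_nonneg ht _
    linarith
  · have h1 : |a - t| ^ p ≤ t ^ p := by
      rw [abs_sub_comm, abs_of_nonneg (by linarith)]
      exact Real.rpow_le_rpow (by linarith) (by linarith) hp.le
    have h2 : (0:ℝ) ≤ a ^ p := Real.rpow_nonneg ha _
    linarith

private lemma lemSub {x y q : ℝ} (hx : 0 ≤ x) (hy : 0 ≤ y) (hq : 0 ≤ q) (hq1 : q ≤ 1) :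
    (x + y) ^ q ≤ x ^ q + y ^ q := by
  have h := NNReal.rpow_add_le_add_rpow x.toNNReal y.toNNReal hq hq1
  have h2 := NNReal.coe_le_coe.2 h
  push_cast at h2
  rwa [Real.coe_toNNReal x hx, Real.coe_toNNReal y hy] at h2

private lemma lemInv {a b : ℝ} (ha : 0 < a) (hab : a ≤ b) : a⁻¹ - b⁻¹ ≤ (b - a) * (a * a)⁻¹ := by
  have hb : 0 < b := lt_of_lt_of_le ha hab
  have h1 : a⁻¹ - b⁻¹ = (b - a) * (a * b)⁻¹ := by field_simp
  rw [h1]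
  apply mul_le_mul_of_nonneg_left _ (by linarith)
  apply inv_anti₀ (by positivity)
  nlinarith

private lemma double_sum_eq {V : Type*} [Fintype V] [DecidableEq V] (d : V → V → ℝ) (j : V)
    (hz : ∀ i l, i ≠ j → l ≠ j → d i l = 0) :
    ∑ i, ∑ l, d i l = (∑ l, d j l) + ((∑ i, d i j) - d j j) := by
  have h1 := Finset.add_sum_erase Finset.univ (fun i => ∑ l, d i l) (Finset.mem_univ j)
  have h2 : ∑ i ∈ Finset.univ.erase j, ∑ l, d i l = ∑ i ∈ Finset.univ.erase j, d i j := by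
    apply Finset.sum_congr rfl
    intro i hi
    exact Finset.sum_eq_single_of_mem j (Finset.mem_univ j)
      (fun l _ hl => hz i l (Finset.ne_of_mem_erase hi) hl)
  have h3 : ∑ i ∈ Finset.univ.erase j, d i j = (∑ i, d i j) - d j j :=
    Finset.sum_erase_eq_sub (Finset.mem_univ j)
  rw [← h1, h2, h3]

private lemma sum_update {V : Type*} [Fintype V] [DecidableEq V] (φ : V → ℝ) (j : V) (t : ℝ)
    (F : V → ℝ → ℝ) :
    ∑ i, F i (Function.update φ j t i) = (∑ i, F i (φ i)) + (F j t - F j (φ j)) := by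
  have h1 : ∑ i, (F i (Function.update φ j t i) - F i (φ i)) = F j t - F j (φ j) := by
    rw [Finset.sum_eq_single_of_mem j (Finset.mem_univ j)]
    · rw [Function.update_self]
    · intro l _ hl
      rw [Function.update_of_ne hl]
      ring
  have h2 : ∑ i, (F i (Function.update φ j t i) - F i (φ i))
      = (∑ i, F i (Function.update φ j t i)) - ∑ i, F i (φ i) := Finset.sum_sub_distrib _ _
  linarith [h2.symm.trans h1]

private lemma energy_diff_le {N0 Nt D e q X Dd : ℝ}
    (hD : 0 < D) (he : 0 ≤ e) (hq0 : 0 < q) (hq1 : q ≤ 1)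
    (hNt : Nt ≤ N0 + X) (hX : X ≤ 0) (hDe : D + e ≤ Dd) :
    Nt * (D + e) ^ (-q) ≤ N0 * D ^ (-q) + X * Dd ^ (-q)
      + |N0| * (e ^ q * (D ^ q * D ^ q)⁻¹) := by
  have hDe0 : 0 < D + e := by linarith
  have hDd : 0 < Dd := lt_of_lt_of_le hDe0 hDe
  have hDq : 0 < D ^ q := Real.rpow_pos_of_pos hD _
  have hDeq : 0 < (D + e) ^ q := Real.rpow_pos_of_pos hDe0 _
  have hDdq : 0 < Dd ^ q := Real.rpow_pos_of_pos hDd _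
  rw [Real.rpow_neg hD.le, Real.rpow_neg hDe0.le, Real.rpow_neg hDd.le]
  have s1 : Nt * ((D + e) ^ q)⁻¹ ≤ (N0 + X) * ((D + e) ^ q)⁻¹ :=
    mul_le_mul_of_nonneg_right hNt (by positivity)
  have e1 : (N0 + X) * ((D + e) ^ q)⁻¹ = N0 * ((D + e) ^ q)⁻¹ + X * ((D + e) ^ q)⁻¹ := by ring
  have hmono : (D + e) ^ q ≤ Dd ^ q := Real.rpow_le_rpow hDe0.le hDe hq0.le
  have s2 : X * ((D + e) ^ q)⁻¹ ≤ X * (Dd ^ q)⁻¹ :=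
    mul_le_mul_of_nonpos_left (inv_anti₀ hDeq hmono) hX
  have hsub : (D + e) ^ q ≤ D ^ q + e ^ q := lemSub hD.le he hq0.le hq1
  have hDDe : D ^ q ≤ (D + e) ^ q := Real.rpow_le_rpow hD.le (by linarith) hq0.le
  have hinv : (D ^ q)⁻¹ - ((D + e) ^ q)⁻¹ ≤ e ^ q * (D ^ q * D ^ q)⁻¹ := by
    have h5 : (D ^ q)⁻¹ - ((D + e) ^ q)⁻¹ ≤ ((D + e) ^ q - D ^ q) * (D ^ q * D ^ q)⁻¹ :=
      lemInv hDq hDDe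
    have h6 : ((D + e) ^ q - D ^ q) * (D ^ q * D ^ q)⁻¹ ≤ e ^ q * (D ^ q * D ^ q)⁻¹ :=
      mul_le_mul_of_nonneg_right (by linarith) (by positivity)
    linarith
  have s3 : N0 * ((D + e) ^ q)⁻¹ - N0 * (D ^ q)⁻¹ ≤ |N0| * (e ^ q * (D ^ q * D ^ q)⁻¹) := by
    have habs1 : N0 * (((D + e) ^ q)⁻¹ - (D ^ q)⁻¹)
        ≤ |N0| * |((D + e) ^ q)⁻¹ - (D ^ q)⁻¹| := by
      calc N0 * (((D + e) ^ q)⁻¹ - (D ^ q)⁻¹) ≤ |N0 * (((D + e) ^ q)⁻¹ - (D ^ q)⁻¹)| :=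
            le_abs_self _
        _ = |N0| * |((D + e) ^ q)⁻¹ - (D ^ q)⁻¹| := abs_mul _ _
    have hle : ((D + e) ^ q)⁻¹ ≤ (D ^ q)⁻¹ := inv_anti₀ hDq hDDe
    have habs2 : |((D + e) ^ q)⁻¹ - (D ^ q)⁻¹| = (D ^ q)⁻¹ - ((D + e) ^ q)⁻¹ := by
      rw [abs_sub_comm]
      exact abs_of_nonneg (by linarith)
    rw [habs2] at habs1
    have h7 : |N0| * ((D ^ q)⁻¹ - ((D + e) ^ q)⁻¹) ≤ |N0| * (e ^ q * (D ^ q * D ^ q)⁻¹) :=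
      mul_le_mul_of_nonneg_left hinv (abs_nonneg _)
    linarith [habs1, h7]
  linarith [s1, s2, s3, e1.symm.le, e1.le]

private lemma choose_t {C1 C3 A B m1 pm : ℝ} (hC1 : 0 < C1) (hC3 : 0 ≤ C3)
    (hA : 0 < A) (hB : 0 ≤ B) (hm1 : 0 < m1) (hpm : 0 < pm) :
    ∃ t, 0 < t ∧ t ≤ m1 ∧ t ≤ 1 ∧ C3 * t ^ pm ≤ C1 ∧ B * t ^ pm ≤ A / 2 := by
  have hC31 : (0:ℝ) < C3 + 1 := by linarith
  have hB1 : (0:ℝ) < B + 1 := by linarith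
  set ε : ℝ := min (C1 / (C3 + 1)) ((A / 2) / (B + 1)) with hε
  have hε0 : 0 < ε := lt_min (by positivity) (by positivity)
  set t : ℝ := min m1 (min 1 (ε ^ pm⁻¹)) with htdef
  have ht0 : 0 < t := lt_min hm1 (lt_min one_pos (Real.rpow_pos_of_pos hε0 _))
  have htε : t ^ pm ≤ ε := by
    have h1 : t ≤ ε ^ pm⁻¹ := le_trans (min_le_right _ _) (min_le_right _ _)
    have h2 : t ^ pm ≤ (ε ^ pm⁻¹) ^ pm := Real.rpow_le_rpow ht0.le h1 hpm.le
    rwa [Real.rpow_inv_rpow hε0.le (ne_of_gt hpm)] at h2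
  refine ⟨t, ht0, min_le_left _ _, le_trans (min_le_right _ _) (min_le_left _ _), ?_, ?_⟩
  · have h3 : C3 * t ^ pm ≤ C3 * ε := mul_le_mul_of_nonneg_left htε hC3
    have h4 : ε ≤ C1 / (C3 + 1) := min_le_left _ _
    have h5 : C3 * ε ≤ C3 * (C1 / (C3 + 1)) := mul_le_mul_of_nonneg_left h4 hC3
    have h7 : C3 / (C3 + 1) ≤ 1 := by rw [div_le_one hC31]; linarith
    have h6 : C3 * (C1 / (C3 + 1)) ≤ C1 := by
      calc C3 * (C1 / (C3 + 1)) = C1 * (C3 / (C3 + 1)) := by ring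
        _ ≤ C1 * 1 := mul_le_mul_of_nonneg_left h7 hC1.le
        _ = C1 := mul_one _
    linarith
  · have h3 : B * t ^ pm ≤ B * ε := mul_le_mul_of_nonneg_left htε hB
    have h4 : ε ≤ (A / 2) / (B + 1) := min_le_right _ _
    have h5 : B * ε ≤ B * ((A / 2) / (B + 1)) := mul_le_mul_of_nonneg_left h4 hB
    have h7 : B / (B + 1) ≤ 1 := by rw [div_le_one hB1]; linarith
    have h6 : B * ((A / 2) / (B + 1)) ≤ A / 2 := by
      calc B * ((A / 2) / (B + 1)) = (A / 2) * (B / (B + 1)) := by ring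
        _ ≤ (A / 2) * 1 := mul_le_mul_of_nonneg_left h7 (by linarith)
        _ = A / 2 := mul_one _
    linarith

/-- The gradient energy `∫_E |∇φ|^p dω = (1/2) ∑_{i,j} ω_ij |φ_j − φ_i|^p`. -/
noncomputable def gradEnergy {V : Type*} [Fintype V] (ω : V → V → ℝ) (p : ℝ)
    (φ : V → ℝ) : ℝ :=
  (1 / 2) * ∑ i, ∑ j, ω i j * |φ j - φ i| ^ p

/-- The energy functional
`I(φ) = (∫_E |∇φ|^p dω − ∫_V h φ^p dμ) (∫_V f φ^α dμ)^{−p/α}`. -/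
noncomputable def energy {V : Type*} [Fintype V] (μ : V → ℝ) (ω : V → V → ℝ)
    (h f : V → ℝ) (p α : ℝ) (φ : V → ℝ) : ℝ :=
  (gradEnergy ω p φ - ∑ i, μ i * (h i * φ i ^ p)) *
    (∑ i, μ i * (f i * φ i ^ α)) ^ (-(p / α))

set_option maxHeartbeats 2000000 in
/-- On a finite connected graph, a nonnegative nonzero minimizer of the energy
functional is everywhere strictly positive. -/
theorem minimizer_positive
    {V : Type*} [Fintype V] [Nonempty V]
    (μ : V → ℝ) (hμ : ∀ i, 0 < μ i)
    (ω : V → V → ℝ) (hωsym : ∀ i j, ω i j = ω j i)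
    (hωnonneg : ∀ i j, 0 ≤ ω i j) (hωloop : ∀ i, ω i i = 0)
    (hconn : ∀ i j : V, Relation.ReflTransGen (fun a b => 0 < ω a b) i j)
    (h f : V → ℝ) (hf : ∀ i, 0 < f i)
    (p α : ℝ) (hp : 1 < p) (hpα : p ≤ α)
    (φhat : V → ℝ) (hnonneg : ∀ i, 0 ≤ φhat i) (hne : φhat ≠ 0)
    (hmin : ∀ φ : V → ℝ, (∀ i, 0 ≤ φ i) → φ ≠ 0 →
      energy μ ω h f p α φhat ≤ energy μ ω h f p α φ) :
    ∀ i, 0 < φhat i := by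
  classical
  by_contra hcon
  push_neg at hcon
  obtain ⟨j0, hj0le⟩ := hcon
  obtain ⟨v, hv⟩ : ∃ v, 0 < φhat v := by
    by_contra hvv
    push_neg at hvv
    exact hne (funext fun i => le_antisymm (hvv i) (hnonneg i))
  obtain ⟨j, k, hj0, hk, hw⟩ : ∃ a b, φhat a = 0 ∧ 0 < φhat b ∧ 0 < ω a b := by
    have hzero : φhat j0 = 0 := le_antisymm hj0le (hnonneg j0)
    have key : ∀ u, Relation.ReflTransGen (fun a b => 0 < ω a b) j0 u → 0 < φhat u →
        ∃ a b, φhat a = 0 ∧ 0 < φhat b ∧ 0 < ω a b := by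
      intro u hpath
      induction hpath with
      | refl => intro hv'; rw [hzero] at hv'; exact absurd hv' (lt_irrefl 0)
      | @tail c d hjc hcd ih =>
        intro hd
        rcases eq_or_lt_of_le (hnonneg c) with hc | hc
        · exact ⟨c, d, hc.symm, hd, hcd⟩
        · exact ih hc
    exact key v (hconn j0 v) hv
  -- basic positivity
  have hp0 : (0:ℝ) < p := lt_trans zero_lt_one hp
  have hα : (0:ℝ) < α := lt_of_lt_of_le hp0 hpα
  have hq0 : 0 < p / α := div_pos hp0 hα
  have hq1 : p / α ≤ 1 := div_le_one_of_le₀ hpα hα.le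
  have hjk : j ≠ k := fun e => by rw [← e, hj0] at hk; exact lt_irrefl 0 hk
  have hD : 0 < ∑ i, μ i * (f i * φhat i ^ α) := by
    apply Finset.sum_pos' (fun i _ => mul_nonneg (hμ i).le
      (mul_nonneg (hf i).le (Real.rpow_nonneg (hnonneg i) α)))
    exact ⟨k, Finset.mem_univ k,
      mul_pos (hμ k) (mul_pos (hf k) (Real.rpow_pos_of_pos hk α))⟩
  -- sums under update
  have hsum_h : ∀ t : ℝ, ∑ i, μ i * (h i * (Function.update φhat j t i) ^ p)
      = (∑ i, μ i * (h i * φhat i ^ p)) + μ j * (h j * t ^ p) := by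
    intro t
    have h1 : ∑ i, μ i * (h i * (Function.update φhat j t i) ^ p)
        = (∑ i, μ i * (h i * φhat i ^ p))
          + (μ j * (h j * t ^ p) - μ j * (h j * (φhat j) ^ p)) :=
      sum_update φhat j t (fun i x => μ i * (h i * x ^ p))
    rw [h1, hj0, Real.zero_rpow (ne_of_gt hp0), mul_zero, mul_zero, sub_zero]
  have hsum_f : ∀ t : ℝ, ∑ i, μ i * (f i * (Function.update φhat j t i) ^ α)
      = (∑ i, μ i * (f i * φhat i ^ α)) + μ j * (f j * t ^ α) := by
    intro t
    have h1 : ∑ i, μ i * (f i * (Function.update φhat j t i) ^ α)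
        = (∑ i, μ i * (f i * φhat i ^ α))
          + (μ j * (f j * t ^ α) - μ j * (f j * (φhat j) ^ α)) :=
      sum_update φhat j t (fun i x => μ i * (f i * x ^ α))
    rw [h1, hj0, Real.zero_rpow (ne_of_gt hα), mul_zero, mul_zero, sub_zero]
  -- gradient energy under update
  have hgrad : ∀ t : ℝ, gradEnergy ω p (Function.update φhat j t)
      = gradEnergy ω p φhat + ∑ l, ω j l * (|φhat l - t| ^ p - |φhat l| ^ p) := by
    intro t
    have hz : ∀ i l : V, i ≠ j → l ≠ j →
        (ω i l * |Function.update φhat j t l - Function.update φhat j t i| ^ p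
          - ω i l * |φhat l - φhat i| ^ p) = 0 := by
      intro i l hi hl
      rw [Function.update_of_ne hi, Function.update_of_ne hl, sub_self]
    have hkey : ∑ i, ∑ l,
        (ω i l * |Function.update φhat j t l - Function.update φhat j t i| ^ p
          - ω i l * |φhat l - φhat i| ^ p)
        = (∑ l, (ω j l * |Function.update φhat j t l - Function.update φhat j t j| ^ p
            - ω j l * |φhat l - φhat j| ^ p))
          + ((∑ i, (ω i j * |Function.update φhat j t j - Function.update φhat j t i| ^ p
            - ω i j * |φhat j - φhat i| ^ p))
            - (ω j j * |Function.update φhat j t j - Function.update φhat j t j| ^ p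
              - ω j j * |φhat j - φhat j| ^ p)) :=
      double_sum_eq
        (fun i l => ω i l * |Function.update φhat j t l - Function.update φhat j t i| ^ p
          - ω i l * |φhat l - φhat i| ^ p) j hz
    have hrow : ∑ l, (ω j l * |Function.update φhat j t l - Function.update φhat j t j| ^ p
          - ω j l * |φhat l - φhat j| ^ p)
        = ∑ l, ω j l * (|φhat l - t| ^ p - |φhat l| ^ p) := by
      apply Finset.sum_congr rfl
      intro l _
      rcases eq_or_ne l j with rfl | hl
      · rw [hωloop]; ring
      · rw [Function.update_of_ne hl, Function.update_self, hj0, sub_zero]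
        ring
    have hcol : ∑ i, (ω i j * |Function.update φhat j t j - Function.update φhat j t i| ^ p
          - ω i j * |φhat j - φhat i| ^ p)
        = ∑ l, ω j l * (|φhat l - t| ^ p - |φhat l| ^ p) := by
      apply Finset.sum_congr rfl
      intro i _
      rcases eq_or_ne i j with rfl | hi
      · rw [hωloop]; ring
      · rw [Function.update_of_ne hi, Function.update_self, hj0, zero_sub, abs_neg,
          abs_sub_comm t (φhat i), hωsym i j]
        ring
    have hjj : (ω j j * |Function.update φhat j t j - Function.update φhat j t j| ^ p
        - ω j j * |φhat j - φhat j| ^ p) = 0 := by rw [hωloop]; ring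
    have hsplit : ∑ i, ∑ l,
        (ω i l * |Function.update φhat j t l - Function.update φhat j t i| ^ p
          - ω i l * |φhat l - φhat i| ^ p)
        = (∑ i, ∑ l, ω i l * |Function.update φhat j t l - Function.update φhat j t i| ^ p)
          - ∑ i, ∑ l, ω i l * |φhat l - φhat i| ^ p := by
      rw [← Finset.sum_sub_distrib]
      exact Finset.sum_congr rfl fun i _ => Finset.sum_sub_distrib _ _
    rw [hrow, hcol, hjj, hsplit] at hkey
    unfold gradEnergy
    linarith [hkey]
  -- admissibility of the perturbations
  have hadm : ∀ t : ℝ, 0 < t →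
      energy μ ω h f p α φhat ≤ energy μ ω h f p α (Function.update φhat j t) := by
    intro t ht
    apply hmin
    · intro i
      rcases eq_or_ne i j with rfl | hi
      · rw [Function.update_self]; exact ht.le
      · rw [Function.update_of_ne hi]; exact hnonneg i
    · intro hzero
      have h0 := congrFun hzero j
      rw [Function.update_self, Pi.zero_apply] at h0
      exact ne_of_gt ht h0
  -- energy of the perturbations
  have hEt : ∀ t : ℝ, energy μ ω h f p α (Function.update φhat j t)
      = ((gradEnergy ω p φhat - ∑ i, μ i * (h i * φhat i ^ p))
          + ((∑ l, ω j l * (|φhat l - t| ^ p - |φhat l| ^ p)) - μ j * (h j * t ^ p)))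
        * ((∑ i, μ i * (f i * φhat i ^ α)) + μ j * (f j * t ^ α)) ^ (-(p / α)) := by
    intro t
    unfold energy
    rw [hgrad t, hsum_h t, hsum_f t]
    congr 1
    ring
  -- abbreviations
  set Gx := gradEnergy ω p φhat with hGxdef
  set Hx := ∑ i, μ i * (h i * φhat i ^ p) with hHxdef
  set Dx := ∑ i, μ i * (f i * φhat i ^ α) with hDxdef
  set W := ∑ l, ω j l with hWdef
  have hWnn : 0 ≤ W := Finset.sum_nonneg fun l _ => hωnonneg j l
  set C1 := ω j k * (p * (φhat k / 2) ^ (p - 1)) with hC1def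
  have hC1 : 0 < C1 :=
    mul_pos hw (mul_pos hp0 (Real.rpow_pos_of_pos (half_pos hk) _))
  set C3 := W + |μ j * h j| with hC3def
  have hC3 : 0 ≤ C3 := add_nonneg hWnn (abs_nonneg _)
  have hdpos : 0 < μ j * f j := mul_pos (hμ j) (hf j)
  set P := (Dx + μ j * f j) ^ (-(p / α)) with hPdef
  have hP : 0 < P := Real.rpow_pos_of_pos (by linarith [hD, hdpos]) _
  set K := |Gx - Hx| * ((μ j * f j) ^ (p / α) * (Dx ^ (p / α) * Dx ^ (p / α))⁻¹) with hKdef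
  have hK : 0 ≤ K :=
    mul_nonneg (abs_nonneg _) (mul_nonneg (Real.rpow_nonneg hdpos.le _)
      (inv_nonneg.mpr (mul_nonneg (Real.rpow_nonneg hD.le _) (Real.rpow_nonneg hD.le _))))
  clear_value K P C3 C1 W Dx Hx Gx
  -- choose the perturbation size
  obtain ⟨t, ht0, htm, ht1, hts, htB⟩ := choose_t (A := C1 * P) (B := C3 * P + K)
    hC1 hC3 (mul_pos hC1 hP) (add_nonneg (mul_nonneg hC3 hP.le) hK)
    (half_pos hk) (by linarith : (0:ℝ) < p - 1)
  have htp : t ^ p = t ^ (p - 1) * t := by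
    have h1 := Real.rpow_add ht0 (p - 1) 1
    rw [Real.rpow_one] at h1
    rw [show p - 1 + 1 = p from by ring] at h1
    exact h1
  have htpnn : (0:ℝ) ≤ t ^ p := Real.rpow_nonneg ht0.le _
  have hEt' := hEt t
  set S := ∑ l, ω j l * (|φhat l - t| ^ p - |φhat l| ^ p) with hSdef
  clear_value S
  -- gradient estimate
  have hgb : S ≤ -(C1 * t) + W * t ^ p := by
    have hterm : ∀ l, ω j l * (|φhat l - t| ^ p - |φhat l| ^ p) ≤ ω j l * t ^ p := by
      intro l
      apply mul_le_mul_of_nonneg_left _ (hωnonneg j l)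
      rw [abs_of_nonneg (hnonneg l)]
      exact lemB (hnonneg l) ht0.le hp0
    have htk : 0 ≤ φhat k - t := by linarith [hk]
    have hterm_k : ω j k * (|φhat k - t| ^ p - |φhat k| ^ p) ≤ -(C1 * t) := by
      rw [abs_of_nonneg htk, abs_of_nonneg (hnonneg k)]
      have hA1 := lemA (m := φhat k) ht0 htm hp
      calc ω j k * ((φhat k - t) ^ p - φhat k ^ p)
          ≤ ω j k * (-(p * (φhat k / 2) ^ (p - 1) * t)) :=
            mul_le_mul_of_nonneg_left hA1 (hωnonneg j k)
        _ = -(C1 * t) := by rw [hC1def]; ring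
    have hsplit : S = ω j k * (|φhat k - t| ^ p - |φhat k| ^ p)
        + ∑ l ∈ Finset.univ.erase k, ω j l * (|φhat l - t| ^ p - |φhat l| ^ p) := by
      rw [hSdef]
      exact (Finset.add_sum_erase _ _ (Finset.mem_univ k)).symm
    have hrest : ∑ l ∈ Finset.univ.erase k, ω j l * (|φhat l - t| ^ p - |φhat l| ^ p)
        ≤ ∑ l ∈ Finset.univ.erase k, ω j l * t ^ p :=
      Finset.sum_le_sum fun l _ => hterm l
    have hrest2 : ∑ l ∈ Finset.univ.erase k, ω j l * t ^ p ≤ W * t ^ p := by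
      calc ∑ l ∈ Finset.univ.erase k, ω j l * t ^ p ≤ ∑ l, ω j l * t ^ p :=
          Finset.sum_le_sum_of_subset_of_nonneg (Finset.subset_univ _)
            (fun l _ _ => mul_nonneg (hωnonneg j l) htpnn)
        _ = W * t ^ p := by rw [hWdef, Finset.sum_mul]
    linarith [hsplit, hrest, hrest2, hterm_k]
  -- numerator estimate
  have hhj : -(μ j * (h j * t ^ p)) ≤ |μ j * h j| * t ^ p := by
    calc -(μ j * (h j * t ^ p)) = (-(μ j * h j)) * t ^ p := by ring
      _ ≤ |μ j * h j| * t ^ p := mul_le_mul_of_nonneg_right (neg_le_abs _) htpnn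
  have hNt : (Gx - Hx) + (S - μ j * (h j * t ^ p))
      ≤ (Gx - Hx) + (-(C1 * t) + C3 * t ^ p) := by
    rw [hC3def]
    linarith [hgb, hhj]
  have hX : -(C1 * t) + C3 * t ^ p ≤ 0 := by
    have h1 : C3 * t ^ p = (C3 * t ^ (p - 1)) * t := by rw [htp]; ring
    linarith [h1, mul_le_mul_of_nonneg_right hts ht0.le]
  have hDe : Dx + μ j * (f j * t ^ α) ≤ Dx + μ j * f j := by
    have h1 : t ^ α ≤ 1 := Real.rpow_le_one ht0.le ht1 hα.le
    have h2 : μ j * f j * t ^ α ≤ μ j * f j * 1 := mul_le_mul_of_nonneg_left h1 hdpos.le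
    linarith [h2]
  have he : 0 ≤ μ j * (f j * t ^ α) :=
    mul_nonneg (hμ j).le (mul_nonneg (hf j).le (Real.rpow_nonneg ht0.le _))
  have hdiff := energy_diff_le (N0 := Gx - Hx) (Nt := (Gx - Hx) + (S - μ j * (h j * t ^ p)))
    (D := Dx) (e := μ j * (f j * t ^ α)) (q := p / α) (X := -(C1 * t) + C3 * t ^ p)
    (Dd := Dx + μ j * f j) hD he hq0 hq1 hNt hX hDe
  rw [← hPdef] at hdiff
  have heq : (μ j * (f j * t ^ α)) ^ (p / α) = (μ j * f j) ^ (p / α) * t ^ p := by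
    rw [show μ j * (f j * t ^ α) = (μ j * f j) * t ^ α from by ring,
      Real.mul_rpow hdpos.le (Real.rpow_nonneg ht0.le _)]
    congr 1
    rw [← Real.rpow_mul ht0.le]
    congr 1
    rw [mul_comm]
    exact div_mul_cancel₀ p (ne_of_gt hα)
  have heqK : |Gx - Hx| * ((μ j * (f j * t ^ α)) ^ (p / α) * (Dx ^ (p / α) * Dx ^ (p / α))⁻¹)
      = K * t ^ p := by
    rw [heq, hKdef]; ring
  have hEalg : (-(C1 * t) + C3 * t ^ p) * P + K * t ^ p
      = (-(C1 * P) + (C3 * P + K) * t ^ (p - 1)) * t := by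
    rw [htp]; ring
  have hE0 : energy μ ω h f p α φhat = (Gx - Hx) * Dx ^ (-(p / α)) := by
    rw [hGxdef, hHxdef, hDxdef]
    rfl
  have hfin1 : energy μ ω h f p α (Function.update φhat j t)
      ≤ energy μ ω h f p α φhat + (-(C1 * P) + (C3 * P + K) * t ^ (p - 1)) * t := by
    rw [hEt', hE0]
    linarith [hdiff, heqK, hEalg]
  have hlt : (-(C1 * P) + (C3 * P + K) * t ^ (p - 1)) * t < 0 := by
    have h1 : (-(C1 * P) + (C3 * P + K) * t ^ (p - 1)) ≤ -(C1 * P) + (C1 * P) / 2 := by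
      linarith [htB]
    have h2 : 0 < C1 * P := mul_pos hC1 hP
    linarith [mul_le_mul_of_nonneg_right h1 ht0.le, mul_pos h2 ht0]
  linarith [hfin1, hlt, hadm t ht0]
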